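/- Let G − v be a fold of G witnessed by u, and H a graph. Let X be the subposet of the face poset of Hom(G,H) consisting of all η with η(u) ⊆ η(v). Define β on X by βη(v) = η(u) and βη(x) = η(x) for x ≠ v. Then β is well-defined and is a descending closure operator on X, with image equal to the copy of the face poset of Hom(G−v,H) given by {η : η(v) = η(u)}. -/

import Mathlib

open Classical in
/-- Let `G − v` be a fold of `G` witnessed by `u`, `H` a graph, and `X` the
subposet of the face poset of `Hom(G,H)` consisting of all `η` with
`η(u) ⊆ η(v)`.  The map `β` with `βη(v) = η(u)`, `βη(x) = η(x)` for `x ≠ v`,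
is well defined and is a descending closure operator on `X` whose image is the
copy `{η : η(v) = η(u)}` of the face poset of `Hom(G−v,H)`. -/
theorem stmt_9 {VG VH : Type*} (G : SimpleGraph VG) (H : SimpleGraph VH)
    (v u : VG) (huv : u ≠ v) (hfold : G.neighborSet v ⊆ G.neighborSet u) :
    letI S : Set (VG → Set VH) :=
      {η | (∀ x, (η x).Nonempty) ∧
        ∀ x y, G.Adj x y → ∀ a ∈ η x, ∀ b ∈ η y, H.Adj a b}
    letI X : Set (VG → Set VH) := {η ∈ S | η u ⊆ η v}
    letI β : (VG → Set VH) → (VG → Set VH) :=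
      fun η x => if x = v then η u else η x
    (∀ η ∈ X, β η ∈ X) ∧
    (∀ η ∈ X, ∀ η' ∈ X, η ≤ η' → β η ≤ β η') ∧
    (∀ η ∈ X, β (β η) = β η) ∧
    (∀ η ∈ X, β η ≤ η) ∧
    β '' X = {η ∈ S | η v = η u} := by
  have hβS : ∀ η : VG → Set VH,
      ((∀ x, (η x).Nonempty) ∧ ∀ x y, G.Adj x y → ∀ a ∈ η x, ∀ b ∈ η y, H.Adj a b) ∧ η u ⊆ η v →
      (∀ x, ((fun x => if x = v then η u else η x) x).Nonempty) ∧
        ∀ x y, G.Adj x y → ∀ a ∈ (if x = v then η u else η x),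
          ∀ b ∈ (if y = v then η u else η y), H.Adj a b := by
    rintro η ⟨⟨hne, hedge⟩, hsub⟩
    constructor
    · intro x
      by_cases hx : x = v <;> simp [hx, hne]
    · intro x y hxy a ha b hb
      by_cases hx : x = v
      · have hy : y ≠ v := fun h => G.loopless.irrefl v (by rwa [hx, h] at hxy)
        rw [if_pos hx] at ha
        rw [if_neg hy] at hb
        exact hedge u y (hfold (by rwa [hx] at hxy)) a ha b hb
      · by_cases hy : y = v
        · rw [if_neg hx] at ha
          rw [if_pos hy] at hb
          exact hedge x u ((hfold (G.adj_symm (by rwa [hy] at hxy))).symm) a ha b hb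
        · rw [if_neg hx] at ha
          rw [if_neg hy] at hb
          exact hedge x y hxy a ha b hb
  refine ⟨?_, ?_, ?_, ?_, ?_⟩
  · intro η hη
    exact ⟨hβS η hη, by simp [if_neg huv]⟩
  · intro η _ η' _ hle x
    by_cases hx : x = v <;> simp only [hx, if_pos, if_neg, ite_true, ite_false, if_true,
      reduceIte] <;> exact hle _
  · intro η _
    funext x
    by_cases hx : x = v <;> simp [hx, if_neg huv]
  · rintro η ⟨_, hsub⟩ x
    by_cases hx : x = v <;> simp [hx]
    exact fun a ha => hsub ha
  · ext η
    simp only [Set.mem_image, Set.mem_setOf_eq]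
    constructor
    · rintro ⟨θ, hθ, rfl⟩
      exact ⟨hβS θ hθ, by simp [if_neg huv]⟩
    · rintro ⟨hS, heq⟩
      refine ⟨η, ⟨hS, le_of_eq heq.symm⟩, ?_⟩
      funext x
      by_cases hx : x = v <;> simp [hx, heq.symm]
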